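/- Let μ be a probability measure on ℝ^d, let u ∈ ℝ^d be a unit vector, and let Ω be a measurable set such that ⟨u, x⟩ > 0 for μ-a.e. x ∈ Ω. Suppose there is a constant C_p > 0 such that for all t ≥ 0, μ(Ω ∩ {x : ⟨u, x⟩ < t}) ≤ C_p · t. Then ∫_Ω ⟨u, x⟩ dμ(x) ≥ μ(Ω)² / (2 C_p). -/

import Mathlib

open MeasureTheory Set
open scoped RealInnerProductSpace

theorem stmt_7 (d : ℕ) (μ : Measure (EuclideanSpace ℝ (Fin d))) [IsProbabilityMeasure μ]
    (u : EuclideanSpace ℝ (Fin d)) (hu : ‖u‖ = 1)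
    (Ω : Set (EuclideanSpace ℝ (Fin d))) (hΩ : MeasurableSet Ω)
    (hpos : ∀ᵐ x ∂μ, x ∈ Ω → 0 < ⟪u, x⟫)
    (Cp : ℝ) (hCp : 0 < Cp)
    (hslab : ∀ t : ℝ, 0 ≤ t → (μ (Ω ∩ {x | ⟪u, x⟫ < t})).toReal ≤ Cp * t)
    (hint : IntegrableOn (fun x => ⟪u, x⟫) Ω μ) :
    (μ Ω).toReal ^ 2 / (2 * Cp) ≤ ∫ x in Ω, ⟪u, x⟫ ∂μ := by
  set f : EuclideanSpace ℝ (Fin d) → ℝ := fun x => ⟪u, x⟫ with hf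
  set ν : Measure (EuclideanSpace ℝ (Fin d)) := μ.restrict Ω with hν
  have fcont : Continuous f := continuous_const.inner continuous_id
  have f_nn : 0 ≤ᵐ[ν] f := by
    rw [hν, Filter.EventuallyLE, ae_restrict_iff' hΩ]
    filter_upwards [hpos] with x hx hxΩ using (hx hxΩ).le
  set M : ℝ := (μ Ω).toReal with hM
  have hM0 : 0 ≤ M := ENNReal.toReal_nonneg
  set T : ℝ := M / Cp with hT
  have hT0 : 0 ≤ T := div_nonneg hM0 hCp.le
  set g : ℝ → ℝ := fun t => ((ν {a | t < f a}).toReal) with hg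
  have key : ∫ x in Ω, f x ∂μ = ∫ t in Ioi (0:ℝ), g t :=
    hint.integral_eq_integral_meas_lt f_nn
  have g_mble : Measurable g := by
    refine Measurable.ennreal_toReal ?_
    exact Antitone.measurable (fun s t hst => measure_mono (fun a h => lt_of_le_of_lt hst h))
  have g_nn : ∀ t, 0 ≤ g t := fun t => ENNReal.toReal_nonneg
  have νfin : ∀ s, ν s ≠ ⊤ := fun s =>
    ((measure_mono (subset_univ s)).trans_lt (measure_lt_top ν univ)).ne
  -- integrability of g on Ioi 0
  have g_int : IntegrableOn g (Ioi (0:ℝ)) := by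
    rw [IntegrableOn, ← memLp_one_iff_integrable]
    constructor
    · exact (g_mble.aestronglyMeasurable).restrict
    · rw [eLpNorm_one_eq_lintegral_enorm]
      have : ∀ t, ‖g t‖ₑ = ν {a | t < f a} := by
        intro t
        rw [Real.enorm_eq_ofReal (g_nn t), ENNReal.ofReal_toReal (νfin _)]
      calc ∫⁻ t in Ioi (0:ℝ), ‖g t‖ₑ
          = ∫⁻ t in Ioi (0:ℝ), ν {a | t < f a} := by
            apply lintegral_congr fun t => this t
        _ = ∫⁻ x, ENNReal.ofReal (f x) ∂ν :=
            (lintegral_eq_lintegral_meas_lt ν f_nn fcont.measurable.aemeasurable).symm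
        _ < ⊤ := hint.lintegral_lt_top
  -- pointwise lower bound on Ioc 0 T
  have g_lb : ∀ t ∈ Ioc (0:ℝ) T, M - Cp * t ≤ g t := by
    intro t ht
    have ht0 : 0 < t := ht.1
    have hle : (ν {a | f a ≤ t}).toReal ≤ Cp * t := by
      have hsub : ∀ ε : ℝ, 0 < ε → (ν {a | f a ≤ t}).toReal ≤ Cp * t + Cp * ε := by
        intro ε hε
        have h1 : ν {a | f a ≤ t} ≤ μ (Ω ∩ {x | f x < t + ε}) := by
          have hms : MeasurableSet {a | f a ≤ t} :=
            measurableSet_le fcont.measurable measurable_const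
          rw [hν, Measure.restrict_apply hms]
          exact measure_mono (fun a ⟨ha1, ha2⟩ => ⟨ha2, lt_of_le_of_lt ha1 (lt_add_of_pos_right t hε)⟩)
        have h2 := hslab (t + ε) (by linarith)
        calc (ν {a | f a ≤ t}).toReal
            ≤ (μ (Ω ∩ {x | f x < t + ε})).toReal :=
              ENNReal.toReal_mono (measure_ne_top μ _) h1
          _ ≤ Cp * (t + ε) := h2
          _ = Cp * t + Cp * ε := by ring
      by_contra hcon
      push_neg at hcon
      obtain ⟨ε, hε, hεlt⟩ : ∃ ε : ℝ, 0 < ε ∧ Cp * t + Cp * ε < (ν {a | f a ≤ t}).toReal := by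
        refine ⟨((ν {a | f a ≤ t}).toReal - Cp * t) / (2 * Cp), div_pos (by linarith) (by positivity), ?_⟩
        have : Cp * (((ν {a | f a ≤ t}).toReal - Cp * t) / (2 * Cp))
            = ((ν {a | f a ≤ t}).toReal - Cp * t) / 2 := by
          field_simp
        rw [this]; linarith
      exact absurd (hsub ε hε) (not_le.mpr hεlt)
    have hcover : M ≤ g t + (ν {a | f a ≤ t}).toReal := by
      have : (univ : Set (EuclideanSpace ℝ (Fin d))) ⊆ {a | t < f a} ∪ {a | f a ≤ t} := by
        intro a _; rcases lt_or_ge t (f a) with h | h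
        · exact Or.inl h
        · exact Or.inr h
      have h1 : μ Ω ≤ ν {a | t < f a} + ν {a | f a ≤ t} := by
        calc μ Ω = ν univ := by rw [hν, Measure.restrict_apply_univ]
          _ ≤ ν ({a | t < f a} ∪ {a | f a ≤ t}) := measure_mono this
          _ ≤ _ := measure_union_le _ _
      have := ENNReal.toReal_mono (by
        simp only [Ne, ENNReal.add_eq_top, not_or]; exact ⟨νfin _, νfin _⟩) h1
      rwa [ENNReal.toReal_add (νfin _) (νfin _)] at this
    linarith
  -- integrability on Ioc 0 T
  have g_int' : IntegrableOn g (Ioc (0:ℝ) T) := g_int.mono_set Ioc_subset_Ioi_self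
  have lb_cont : Continuous (fun t : ℝ => M - Cp * t) :=
    continuous_const.sub (continuous_const.mul continuous_id)
  have step1 : ∫ t in Ioc (0:ℝ) T, (M - Cp * t) ≤ ∫ t in Ioc (0:ℝ) T, g t := by
    exact setIntegral_mono_on lb_cont.integrableOn_Ioc g_int' measurableSet_Ioc g_lb
  have step2 : ∫ t in Ioc (0:ℝ) T, g t ≤ ∫ t in Ioi (0:ℝ), g t := by
    apply setIntegral_mono_set g_int (Filter.Eventually.of_forall g_nn)
    exact HasSubset.Subset.eventuallyLE Ioc_subset_Ioi_self
  have calc1 : ∫ t in Ioc (0:ℝ) T, (M - Cp * t) = M ^ 2 / (2 * Cp) := by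
    rw [← intervalIntegral.integral_of_le hT0]
    have : ∫ t in (0:ℝ)..T, (M - Cp * t) = M * T - Cp * (T ^ 2 / 2) := by
      rw [intervalIntegral.integral_sub (intervalIntegrable_const)
        ((by fun_prop : Continuous (fun t : ℝ => Cp * t)).intervalIntegrable 0 T)]
      rw [intervalIntegral.integral_const, intervalIntegral.integral_const_mul, integral_id]
      simp; ring
    rw [this, hT]
    field_simp
    ring
  calc M ^ 2 / (2 * Cp) = ∫ t in Ioc (0:ℝ) T, (M - Cp * t) := calc1.symm
    _ ≤ ∫ t in Ioc (0:ℝ) T, g t := step1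
    _ ≤ ∫ t in Ioi (0:ℝ), g t := step2
    _ = ∫ x in Ω, f x ∂μ := key.symm
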